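/- Let X₁,...,Xₙ be i.i.d. random variables each distributed as the product of two independent standard normal random variables, and let X̄ = (1/n)∑Xᵢ. If n ≥ 2, then for any real β, P(X̄ > n^{-1/2+β}) ≤ 2·exp(-n^β). -/

import Mathlib

open MeasureTheory ProbabilityTheory

lemma gauss_lintegral_exp_quadratic {b d : ℝ} (hb : 0 < b) :
    ∫⁻ x : ℝ, ENNReal.ofReal (Real.exp (-(b * x ^ 2) + d * x)) =
      ENNReal.ofReal (Real.sqrt (Real.pi / b) * Real.exp (d ^ 2 / (4 * b))) := by
  have hfun : ∀ x : ℝ, Real.exp (-(b * x ^ 2) + d * x)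
      = Real.exp (d ^ 2 / (4 * b)) * Real.exp (-b * (x - d / (2 * b)) ^ 2) := by
    intro x
    rw [← Real.exp_add]
    congr 1
    field_simp
    ring
  have hint : Integrable (fun x : ℝ => Real.exp (-b * (x - d / (2 * b)) ^ 2)) := by
    exact (integrable_exp_neg_mul_sq hb).comp_sub_right _
  have hint2 : Integrable (fun x : ℝ => Real.exp (-(b * x ^ 2) + d * x)) := by
    simp_rw [hfun]; exact hint.const_mul _
  rw [← ofReal_integral_eq_lintegral_ofReal hint2
      (Filter.Eventually.of_forall fun x => (Real.exp_pos _).le)]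
  congr 1
  simp_rw [hfun]
  rw [integral_const_mul, integral_sub_right_eq_self (fun x => Real.exp (-b * x ^ 2)),
    integral_gaussian]
  ring

lemma lintegral_ofReal_gaussianReal (f : ℝ → ℝ) (hf : Measurable f) :
    ∫⁻ x, ENNReal.ofReal (f x) ∂(gaussianReal 0 1)
      = ∫⁻ x, ENNReal.ofReal (gaussianPDFReal 0 1 x * f x) := by
  rw [gaussianReal_of_var_ne_zero _ one_ne_zero,
    lintegral_withDensity_eq_lintegral_mul _ (measurable_gaussianPDF _ _) hf.ennreal_ofReal]
  congr 1 with x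
  simp [gaussianPDF, ENNReal.ofReal_mul (gaussianPDFReal_nonneg _ _ _)]

lemma gaussianPDFReal_mul_eq (x g : ℝ) :
    gaussianPDFReal 0 1 x * g = (Real.sqrt (2 * Real.pi))⁻¹ * (Real.exp (-(x ^ 2) / 2) * g) := by
  rw [gaussianPDFReal_def]
  norm_num
  ring

lemma gaussianReal_lintegral_exp (t : ℝ) :
    ∫⁻ x, ENNReal.ofReal (Real.exp (t * x)) ∂(gaussianReal 0 1)
      = ENNReal.ofReal (Real.exp (t ^ 2 / 2)) := by
  rw [lintegral_ofReal_gaussianReal _ (by fun_prop)]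
  have h : ∀ x : ℝ, gaussianPDFReal 0 1 x * Real.exp (t * x)
      = (Real.sqrt (2 * Real.pi))⁻¹ * Real.exp (-((1/2) * x ^ 2) + t * x) := by
    intro x
    rw [gaussianPDFReal_mul_eq, ← Real.exp_add]
    ring_nf
  simp_rw [h, ENNReal.ofReal_mul (inv_nonneg.2 (Real.sqrt_nonneg _))]
  rw [lintegral_const_mul _ (by fun_prop),
    gauss_lintegral_exp_quadratic (by norm_num : (0:ℝ) < 1/2),
    ← ENNReal.ofReal_mul (inv_nonneg.2 (Real.sqrt_nonneg _))]
  congr 1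
  rw [show Real.pi / (1/2:ℝ) = 2 * Real.pi by ring, show t ^ 2 / (4 * (1/2:ℝ)) = t ^ 2 / 2 by ring,
    ← mul_assoc, inv_mul_cancel₀ (Real.sqrt_ne_zero'.mpr (by positivity)), one_mul]

lemma gaussianReal_lintegral_exp_sq {c : ℝ} (hc : c < 1/2) :
    ∫⁻ x, ENNReal.ofReal (Real.exp (c * x ^ 2)) ∂(gaussianReal 0 1)
      = ENNReal.ofReal ((Real.sqrt (1 - 2 * c))⁻¹) := by
  rw [lintegral_ofReal_gaussianReal _ (by fun_prop)]
  have h : ∀ x : ℝ, gaussianPDFReal 0 1 x * Real.exp (c * x ^ 2)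
      = (Real.sqrt (2 * Real.pi))⁻¹ * Real.exp (-((1/2 - c) * x ^ 2) + 0 * x) := by
    intro x
    rw [gaussianPDFReal_mul_eq, ← Real.exp_add]
    ring_nf
  simp_rw [h, ENNReal.ofReal_mul (inv_nonneg.2 (Real.sqrt_nonneg _))]
  rw [lintegral_const_mul _ (by fun_prop),
    gauss_lintegral_exp_quadratic (by linarith : (0:ℝ) < 1/2 - c),
    ← ENNReal.ofReal_mul (inv_nonneg.2 (Real.sqrt_nonneg _))]
  congr 1
  have hb : (0:ℝ) < 1/2 - c := by linarith
  rw [show (0:ℝ) ^ 2 / (4 * (1/2 - c)) = 0 by simp, Real.exp_zero, mul_one,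
    inv_mul_eq_div, ← Real.sqrt_div (by positivity : (0:ℝ) ≤ Real.pi / (1/2 - c)),
    show Real.pi / (1/2 - c) / (2 * Real.pi) = (1 - 2*c)⁻¹ by
      rw [div_div, show (1/2 - c) * (2 * Real.pi) = Real.pi * (1 - 2*c) by ring, ← div_div,
        div_self Real.pi_ne_zero, one_div], Real.sqrt_inv]

/-- The distribution `𝓕` of the product of two independent standard normal random variables. -/
noncomputable def prodNormalDist : Measure ℝ :=
  ((gaussianReal 0 1).prod (gaussianReal 0 1)).map (fun p => p.1 * p.2)

lemma prodNormalDist_lintegral_exp {t : ℝ} (ht : t ^ 2 < 1) :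
    ∫⁻ x, ENNReal.ofReal (Real.exp (t * x)) ∂prodNormalDist
      = ENNReal.ofReal ((Real.sqrt (1 - t ^ 2))⁻¹) := by
  rw [prodNormalDist, lintegral_map (by fun_prop) (by fun_prop),
    lintegral_prod _ (by fun_prop)]
  have h1 : ∀ x : ℝ, ∫⁻ y, ENNReal.ofReal (Real.exp (t * (x * y))) ∂(gaussianReal 0 1)
      = ENNReal.ofReal (Real.exp ((t ^ 2 / 2) * x ^ 2)) := by
    intro x
    have h2 : ∀ y : ℝ, t * (x * y) = (t * x) * y := fun y => by ring
    simp_rw [h2, gaussianReal_lintegral_exp (t * x)]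
    congr 1
    ring
  simp_rw [h1]
  rw [gaussianReal_lintegral_exp_sq (by nlinarith : t ^ 2 / 2 < 1/2)]
  congr 2
  ring

lemma integrable_exp_prodNormal {t : ℝ} (ht : t ^ 2 < 1) :
    Integrable (fun x => Real.exp (t * x)) prodNormalDist := by
  refine ⟨(by fun_prop : Measurable fun x => Real.exp (t * x)).aestronglyMeasurable, ?_⟩
  rw [hasFiniteIntegral_iff_ofReal (Filter.Eventually.of_forall fun x => (Real.exp_pos _).le),
    prodNormalDist_lintegral_exp ht]
  exact ENNReal.ofReal_lt_top

lemma mgf_of_prodNormal {Ω : Type*} [MeasurableSpace Ω] (μ : Measure Ω)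
    (Y : Ω → ℝ) (hY : Measurable Y) (hd : Measure.map Y μ = prodNormalDist)
    {t : ℝ} (ht : t ^ 2 < 1) :
    Integrable (fun ω => Real.exp (t * Y ω)) μ ∧
      mgf Y μ t = (Real.sqrt (1 - t ^ 2))⁻¹ := by
  have hg : AEStronglyMeasurable (fun x => Real.exp (t * x)) (Measure.map Y μ) :=
    (by fun_prop : Measurable fun x => Real.exp (t * x)).aestronglyMeasurable
  have hInt : Integrable (fun ω => Real.exp (t * Y ω)) μ := by
    have := (integrable_map_measure hg hY.aemeasurable).mp (by rw [hd]; exact integrable_exp_prodNormal ht)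
    exact this
  refine ⟨hInt, ?_⟩
  have h1 : mgf Y μ t = ∫ x, Real.exp (t * x) ∂(Measure.map Y μ) :=
    (integral_map hY.aemeasurable hg).symm
  rw [h1, hd, integral_eq_lintegral_of_nonneg_ae
      (Filter.Eventually.of_forall fun x => (Real.exp_pos _).le)
      (by fun_prop : Measurable fun x => Real.exp (t * x)).aestronglyMeasurable,
    prodNormalDist_lintegral_exp ht, ENNReal.toReal_ofReal (by positivity)]

lemma one_sub_inv_pow_ge {n : ℕ} (hn : 2 ≤ n) : (1/4 : ℝ) ≤ (1 - (n:ℝ)⁻¹) ^ n := by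
  rcases (by omega : n = 2 ∨ n = 3 ∨ 4 ≤ n) with h | h | h
  · subst h; norm_num
  · subst h; norm_num
  · have hx : (4:ℝ) ≤ (n:ℝ) := by exact_mod_cast h
    have hx0 : (0:ℝ) < (n:ℝ) := by linarith
    have hn1 : (0:ℝ) < (n:ℝ) - 1 := by linarith
    have hpos : (0:ℝ) < 1 - (n:ℝ)⁻¹ := by
      rw [sub_pos]
      exact inv_lt_one_of_one_lt₀ (by linarith)
    have hlog : -(((n:ℝ) - 1)⁻¹) ≤ Real.log (1 - (n:ℝ)⁻¹) := by
      have h2 := Real.log_le_sub_one_of_pos (inv_pos.2 hpos)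
      rw [Real.log_inv] at h2
      have h3 : (1 - (n:ℝ)⁻¹)⁻¹ - 1 = ((n:ℝ) - 1)⁻¹ := by
        rw [show (1 - (n:ℝ)⁻¹) = ((n:ℝ) - 1) / n by field_simp, inv_div]
        field_simp
        ring
      rw [h3] at h2
      linarith
    have hkey : Real.log (1/4 : ℝ) ≤ (n:ℝ) * Real.log (1 - (n:ℝ)⁻¹) := by
      have hl4 : Real.log (1/4 : ℝ) = -(2 * Real.log 2) := by
        rw [one_div, Real.log_inv, show (4:ℝ) = 2 ^ 2 by norm_num, Real.log_pow]
        push_cast; ring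
      rw [hl4]
      have h5 : (n:ℝ) * (-(((n:ℝ) - 1)⁻¹)) ≤ (n:ℝ) * Real.log (1 - (n:ℝ)⁻¹) :=
        mul_le_mul_of_nonneg_left hlog hx0.le
      have h6 : (n:ℝ) * ((n:ℝ) - 1)⁻¹ ≤ 4/3 := by
        rw [← div_eq_mul_inv, div_le_div_iff₀ hn1 (by norm_num)]
        linarith
      have h7 : (0.6931471803 : ℝ) < Real.log 2 := Real.log_two_gt_d9
      nlinarith
    calc (1/4 : ℝ) = Real.exp (Real.log (1/4)) := (Real.exp_log (by norm_num)).symm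
      _ ≤ Real.exp ((n:ℝ) * Real.log (1 - (n:ℝ)⁻¹)) := Real.exp_le_exp.2 hkey
      _ = (1 - (n:ℝ)⁻¹) ^ n := by
          rw [← Real.log_pow, Real.exp_log (pow_pos hpos n)]

/-- Let `X₁, ..., Xₙ` be i.i.d. random variables each distributed as the product of two
independent standard normals, and let `X̄ = (1/n) ∑ Xᵢ`.  If `n ≥ 2`, then for any real `β`,
`P(X̄ > n^(-1/2+β)) ≤ 2 * exp (-n^β)`. -/
theorem sample_mean_product_normal_tail
    {Ω : Type*} [MeasurableSpace Ω] (μ : Measure Ω) [IsProbabilityMeasure μ]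
    (n : ℕ) (hn : 2 ≤ n) (X : Fin n → Ω → ℝ)
    (hmeas : ∀ i, Measurable (X i))
    (hindep : iIndepFun X μ)
    (hdist : ∀ i, Measure.map (X i) μ = prodNormalDist)
    (β : ℝ) :
    μ {ω | (n : ℝ) ^ (-(1 : ℝ) / 2 + β) < (∑ i, X i ω) / n} ≤
      ENNReal.ofReal (2 * Real.exp (-(n : ℝ) ^ β)) := by
  have hn2 : (2:ℝ) ≤ (n:ℝ) := by exact_mod_cast hn
  have hn0 : (0:ℝ) < (n:ℝ) := by linarith
  set t : ℝ := (n:ℝ) ^ (-(1:ℝ)/2) with hts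
  have htpos : 0 < t := Real.rpow_pos_of_pos hn0 _
  have ht2 : t ^ 2 = ((n:ℝ))⁻¹ := by
    rw [hts, ← Real.rpow_natCast ((n:ℝ) ^ (-(1:ℝ)/2)) 2, ← Real.rpow_mul hn0.le]
    norm_num [Real.rpow_neg_one]
  have ht1 : t ^ 2 < 1 := by
    rw [ht2]
    exact inv_lt_one_of_one_lt₀ (by linarith)
  have hmgfs := fun i => mgf_of_prodNormal μ (X i) (hmeas i) (hdist i) ht1
  have hint_sum : Integrable (fun ω => Real.exp (t * (∑ i, X i) ω)) μ :=
    hindep.integrable_exp_mul_sum hmeas (fun i _ => (hmgfs i).1)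
  have hmgf_sum : mgf (∑ i, X i) μ t = ((Real.sqrt (1 - t ^ 2))⁻¹) ^ n := by
    rw [hindep.mgf_sum hmeas, Finset.prod_congr rfl (fun i _ => (hmgfs i).2),
      Finset.prod_const, Finset.card_univ, Fintype.card_fin]
  have h1t2 : (0:ℝ) < 1 - t ^ 2 := by linarith
  have hpow : ((Real.sqrt (1 - t ^ 2))⁻¹) ^ n ≤ 2 := by
    have h14 := one_sub_inv_pow_ge hn
    have hspos : 0 < Real.sqrt (1 - t ^ 2) := Real.sqrt_pos.2 h1t2
    have hs2 : Real.sqrt (1 - t ^ 2) ^ 2 = 1 - t ^ 2 := Real.sq_sqrt h1t2.le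
    have hsn : (1/2 : ℝ) ≤ Real.sqrt (1 - t ^ 2) ^ n := by
      have h1 : (Real.sqrt (1 - t ^ 2) ^ n) ^ 2 = (1 - (n:ℝ)⁻¹) ^ n := by
        rw [← pow_mul, mul_comm, pow_mul, hs2, ht2]
      nlinarith [pow_nonneg hspos.le n]
    rw [inv_pow]
    calc (Real.sqrt (1 - t ^ 2) ^ n)⁻¹ ≤ ((1:ℝ)/2)⁻¹ :=
          inv_anti₀ (by norm_num) hsn
      _ = 2 := by norm_num
  set ε : ℝ := (n:ℝ) * (n:ℝ) ^ (-(1:ℝ)/2 + β) with hε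
  have hexp : t * ε = (n:ℝ) ^ β := by
    have h0 : t * ε = (n:ℝ) ^ (-(1:ℝ)/2) * ((n:ℝ) ^ (1:ℝ) * (n:ℝ) ^ (-(1:ℝ)/2 + β)) := by
      rw [hts, hε, Real.rpow_one]
    rw [h0, ← Real.rpow_add hn0, ← Real.rpow_add hn0]
    congr 1
    ring
  have hsub : {ω | (n : ℝ) ^ (-(1 : ℝ) / 2 + β) < (∑ i, X i ω) / n}
      ⊆ {ω | ε ≤ (∑ i, X i) ω} := by
    intro ω hω
    simp only [Set.mem_setOf_eq, Finset.sum_apply] at hω ⊢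
    rw [lt_div_iff₀ hn0] at hω
    rw [hε, mul_comm]
    exact hω.le
  have hch := measure_ge_le_exp_mul_mgf (X := ∑ i, X i) (μ := μ) ε htpos.le hint_sum
  calc μ {ω | (n : ℝ) ^ (-(1 : ℝ) / 2 + β) < (∑ i, X i ω) / n}
      ≤ μ {ω | ε ≤ (∑ i, X i) ω} := measure_mono hsub
    _ = ENNReal.ofReal ((μ {ω | ε ≤ (∑ i, X i) ω}).toReal) :=
        (ENNReal.ofReal_toReal (measure_ne_top _ _)).symm
    _ ≤ ENNReal.ofReal (Real.exp (-t * ε) * mgf (∑ i, X i) μ t) :=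
        ENNReal.ofReal_le_ofReal hch
    _ ≤ ENNReal.ofReal (2 * Real.exp (-(n:ℝ) ^ β)) := by
        apply ENNReal.ofReal_le_ofReal
        rw [hmgf_sum, neg_mul, hexp]
        calc Real.exp (-(n:ℝ) ^ β) * ((Real.sqrt (1 - t ^ 2))⁻¹) ^ n
            ≤ Real.exp (-(n:ℝ) ^ β) * 2 :=
              mul_le_mul_of_nonneg_left hpow (Real.exp_pos _).le
          _ = 2 * Real.exp (-(n:ℝ) ^ β) := mul_comm _ _
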